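/- Let G be a finite group, k a field of characteristic 2 that is a splitting field for G, and M a nontrivial self-dual simple kG-module. Then there exists a nondegenerate G-invariant alternating (symplectic) bilinear form on M, unique up to scalar (Fong's Lemma). In particular dim_k M is even. -/

import Mathlib

open Module LinearMap

/-- A nondegenerate alternating bilinear form forces even dimension. -/
lemma altEvenAux {K : Type*} [Field K] (n : ℕ) :
    ∀ (V : Type u) [AddCommGroup V] [Module K V] [FiniteDimensional K V]
      (B : LinearMap.BilinForm K V), B.IsAlt → B.Nondegenerate →
      Module.finrank K V = n → Even n := by
  induction n using Nat.strong_induction_on with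
  | _ n ih =>
    intro V _ _ _ B halt hnd hrank
    rcases Nat.eq_zero_or_pos n with h0 | hpos
    · subst h0; exact Even.zero
    have hrefl : B.IsRefl := halt.isRefl
    -- pick a nonzero vector
    haveI : Nontrivial V := by
      rw [← Module.finrank_pos_iff (R := K)]; omega
    obtain ⟨x, hx⟩ := exists_ne (0 : V)
    obtain ⟨y, hxy⟩ : ∃ y, B x y ≠ 0 := by
      by_contra h
      push_neg at h
      exact hx (hnd.1 x h)
    have hy : y ≠ 0 := fun h => hxy (by simp [h])
    have hli : LinearIndependent K ![x, y] := by
      rw [LinearIndependent.pair_iff]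
      intro s t hst
      have h1 : B (s • x + t • y) y = 0 := by rw [hst]; simp
      simp only [map_add, map_smul, LinearMap.add_apply, LinearMap.smul_apply,
        smul_eq_mul, halt y, mul_zero, add_zero] at h1
      have hs : s = 0 := by
        rcases mul_eq_zero.mp h1 with h | h
        · exact h
        · exact absurd h hxy
      subst hs
      simp only [zero_smul, zero_add] at hst
      rcases smul_eq_zero.mp hst with h | h
      · exact ⟨rfl, h⟩
      · exact absurd h hy
    set W : Submodule K V := Submodule.span K (Set.range ![x, y]) with hWdef
    have hWrank : Module.finrank K W = 2 := by
      rw [hWdef, finrank_span_eq_card hli]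
      simp
    have hxW : x ∈ W := Submodule.subset_span ⟨0, rfl⟩
    have hyW : y ∈ W := Submodule.subset_span ⟨1, rfl⟩
    have hdisj : Disjoint W (B.orthogonal W) := by
      rw [disjoint_iff]
      rw [eq_bot_iff]
      intro v hv
      obtain ⟨hv1, hv2⟩ := Submodule.mem_inf.mp hv
      have hxv : B x v = 0 := hv2 x hxW
      have hyv : B y v = 0 := hv2 y hyW
      have hvW : v ∈ Submodule.span K ({x, y} : Set V) := by
        convert hv1 using 2
        simp [hWdef]
        ext z; simp [Set.range, Fin.exists_fin_two]
        tauto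
      obtain ⟨a, b, hab⟩ := Submodule.mem_span_pair.mp hvW
      have hxv' : b * B x y = 0 := by
        have := hxv
        rw [← hab] at this
        simpa [halt x, mul_comm] using this
      have hb : b = 0 := by
        rcases mul_eq_zero.mp hxv' with h | h
        · exact h
        · exact absurd h hxy
      have hyx : B y x ≠ 0 := fun h => hxy (neg_eq_zero.mp ((LinearMap.IsAlt.neg halt x y).trans h))
      have hyv' : a * B y x = 0 := by
        have := hyv
        rw [← hab] at this
        simpa [halt y, hb] using this
      have ha : a = 0 := by
        rcases mul_eq_zero.mp hyv' with h | h
        · exact h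
        · exact absurd h hyx
      simp [← hab, ha, hb]
    have hresW : (B.restrict W).Nondegenerate :=
      B.nondegenerate_restrict_of_disjoint_orthogonal hrefl hdisj
    have hcompl := LinearMap.BilinForm.isCompl_orthogonal_of_restrict_nondegenerate
      (B := B) (W := W) hrefl hresW
    have hresO : (B.restrict (B.orthogonal W)).Nondegenerate := by
      apply B.nondegenerate_restrict_of_disjoint_orthogonal hrefl
      rw [LinearMap.BilinForm.orthogonal_orthogonal hnd hrefl]
      exact hdisj.symm
    have hsum : Module.finrank K W + Module.finrank K (B.orthogonal W) =
        Module.finrank K V := Submodule.finrank_add_eq_of_isCompl hcompl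
    have hOrank : Module.finrank K (B.orthogonal W) = n - 2 := by omega
    have hlt : n - 2 < n := by omega
    have heven := ih (n - 2) hlt (B.orthogonal W) (B.restrict (B.orthogonal W))
      (fun v => halt v) hresO hOrank
    obtain ⟨m, hm⟩ := heven
    exact ⟨m + 1, by omega⟩

theorem stmt16 (k : Type*) [Field k] [IsAlgClosed k] (hchar : CharP k 2)
    {G : Type*} [Group G] [Fintype G]
    (V : Type*) [AddCommGroup V] [Module k V] [FiniteDimensional k V]
    (ρ : Representation k G V)
    (hsimple : Nontrivial V ∧ ∀ W : Submodule k V,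
      (∀ g : G, W.map (ρ g) ≤ W) → W = ⊥ ∨ W = ⊤)
    (hselfdual : ∃ e : V ≃ₗ[k] Module.Dual k V,
      ∀ (g : G) (v w : V), e (ρ g v) w = e v (ρ g⁻¹ w))
    (hnontrivaction : ∃ (g : G) (v : V), ρ g v ≠ v) :
    ∃ B : V →ₗ[k] V →ₗ[k] k,
      (∀ v : V, B v v = 0) ∧
      (∀ (g : G) (x y : V), B (ρ g x) (ρ g y) = B x y) ∧
      LinearMap.BilinForm.Nondegenerate B ∧
      (∀ B' : V →ₗ[k] V →ₗ[k] k,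
        (∀ v : V, B' v v = 0) →
        (∀ (g : G) (x y : V), B' (ρ g x) (ρ g y) = B' x y) →
        LinearMap.BilinForm.Nondegenerate B' →
        ∃ c : k, c ≠ 0 ∧ B' = c • B) ∧
      Even (Module.finrank k V) := by
  haveI := hchar
  have hsq : ∀ c : k, c * c = 1 → c = 1 := by
    intro c hcc
    have h : (c - 1) * (c + 1) = 0 := by linear_combination hcc
    rcases mul_eq_zero.mp h with h | h
    · exact sub_eq_zero.mp h
    · exact (eq_neg_of_add_eq_zero_left h).trans (CharTwo.neg_eq 1)
  obtain ⟨hnt, hsimp⟩ := hsimple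
  obtain ⟨e, he⟩ := hselfdual
  -- the basic cancellation
  have hcancel : ∀ (g : G) (v : V), ρ g⁻¹ (ρ g v) = v := by
    intro g v
    rw [← Module.End.mul_apply, ← map_mul, inv_mul_cancel, map_one, Module.End.one_apply]
  -- the bilinear form coming from e
  set B : V →ₗ[k] V →ₗ[k] k := e.toLinearMap with hBdef
  have hBapp : ∀ v w : V, B v w = e v w := fun _ _ => rfl
  have hBinv : ∀ (g : G) (x y : V), B (ρ g x) (ρ g y) = B x y := by
    intro g x y
    rw [hBapp, hBapp, he g x (ρ g y), hcancel]
  have hBnd : LinearMap.BilinForm.Nondegenerate B := by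
    refine ⟨fun v hv => ?_, fun y hy => ?_⟩
    swap
    · exact (Module.forall_dual_apply_eq_zero_iff k y).mp fun φ => by simpa [hBdef] using hy (e.symm φ)
    have : e v = 0 := LinearMap.ext fun w => hv w
    exact e.injective (by simpa using this)
  -- Schur's lemma
  have schur : ∀ f : V →ₗ[k] V, (∀ (g : G) (v : V), f (ρ g v) = ρ g (f v)) →
      ∃ μ : k, f = μ • LinearMap.id := by
    intro f hf
    obtain ⟨μ, hμ⟩ := Module.End.exists_eigenvalue f
    have hW : ∀ g : G, (Module.End.eigenspace f μ).map (ρ g) ≤ Module.End.eigenspace f μ := by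
      intro g w hw
      obtain ⟨v, hv, rfl⟩ := hw
      have hv' : f v = μ • v := Module.End.mem_eigenspace_iff.mp hv
      exact Module.End.mem_eigenspace_iff.mpr (by rw [hf, hv', map_smul])
    rcases hsimp _ hW with h | h
    · exact absurd h (Module.End.hasEigenvalue_iff.mp hμ)
    · refine ⟨μ, LinearMap.ext fun v => ?_⟩
      have : v ∈ Module.End.eigenspace f μ := h ▸ Submodule.mem_top
      have h2 := Module.End.mem_eigenspace_iff.mp this
      simpa using h2
  -- every invariant bilinear form is a multiple of B
  have huniq : ∀ C : V →ₗ[k] V →ₗ[k] k,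
      (∀ (g : G) (x y : V), C (ρ g x) (ρ g y) = C x y) → ∃ c : k, C = c • B := by
    intro C hC
    set φ : V →ₗ[k] V := e.symm.toLinearMap ∘ₗ C with hφdef
    have hφapp : ∀ v, φ v = e.symm (C v) := fun _ => rfl
    have hφcomm : ∀ (g : G) (v : V), φ (ρ g v) = ρ g (φ v) := by
      intro g v
      apply e.injective
      apply LinearMap.ext
      intro w
      have h1 : (e (φ (ρ g v))) w = C (ρ g v) w := by
        rw [hφapp, e.apply_symm_apply]
      have h2 : (e (ρ g (φ v))) w = C (ρ g v) w := by
        rw [he g (φ v) w, hφapp, e.apply_symm_apply]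
        calc C v (ρ g⁻¹ w) = C (ρ g v) (ρ g (ρ g⁻¹ w)) := (hC g v (ρ g⁻¹ w)).symm
          _ = C (ρ g v) w := by
              rw [← Module.End.mul_apply, ← map_mul, mul_inv_cancel, map_one,
                Module.End.one_apply]
      rw [h1, h2]
    obtain ⟨c, hc⟩ := schur φ hφcomm
    refine ⟨c, LinearMap.ext fun v => ?_⟩
    have : φ v = c • v := by rw [hc]; rfl
    have h3 : e.symm (C v) = c • v := this
    have h4 : C v = e (c • v) := by rw [← h3, e.apply_symm_apply]
    rw [h4, map_smul]
    rfl
  -- B is symmetric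
  have hBne : ∃ v w : V, B v w ≠ 0 := by
    obtain ⟨v, hv⟩ := exists_ne (0 : V)
    by_contra h
    push_neg at h
    exact hv (hBnd.1 v (h v))
  have hsym : ∀ x y : V, B y x = B x y := by
    have hflipinv : ∀ (g : G) (x y : V), B.flip (ρ g x) (ρ g y) = B.flip x y := by
      intro g x y
      simp only [LinearMap.flip_apply]
      exact hBinv g y x
    obtain ⟨c, hc⟩ := huniq B.flip hflipinv
    obtain ⟨v, w, hvw⟩ := hBne
    have hcc : ∀ x y : V, B y x = c * B x y := by
      intro x y
      have h := congrArg (fun F : V →ₗ[k] V →ₗ[k] k => F x y) hc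
      simpa using h
    have hc2 : c * c = 1 := by
      have h1 : B v w = c * (c * B v w) := by
        calc B v w = c * B w v := hcc w v
          _ = c * (c * B v w) := by rw [hcc v w]
      have h : (c * c - 1) * B v w = 0 := by linear_combination -h1
      rcases mul_eq_zero.mp h with h | h
      · exact sub_eq_zero.mp h
      · exact absurd h hvw
    have hc1 : c = 1 := hsq c hc2
    intro x y
    rw [hcc x y, hc1, one_mul]
  -- the subspace where B x x = 0
  set Q : V → k := fun x => B x x with hQdef
  have hQadd : ∀ x y : V, Q (x + y) = Q x + Q y := by
    intro x y
    simp only [hQdef, map_add, LinearMap.add_apply]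
    rw [hsym x y]
    linear_combination (CharTwo.add_self_eq_zero (B x y) : B x y + B x y = 0)
  have hQsmul : ∀ (a : k) (x : V), Q (a • x) = a * a * Q x := by
    intro a x
    simp only [hQdef, map_smul, LinearMap.smul_apply, smul_eq_mul]
    ring
  set W : Submodule k V :=
    { carrier := {x | Q x = 0}
      add_mem' := fun {a b} ha hb => by
        simp only [Set.mem_setOf_eq] at *
        rw [hQadd, ha, hb, add_zero]
      zero_mem' := by simp [hQdef]
      smul_mem' := fun a x hx => by
        simp only [Set.mem_setOf_eq] at *
        rw [hQsmul, hx, mul_zero] } with hWdef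
  have hWmem : ∀ x : V, x ∈ W ↔ Q x = 0 := fun x => Iff.rfl
  have hWinv : ∀ g : G, W.map (ρ g) ≤ W := by
    intro g w hw
    obtain ⟨v, hv, rfl⟩ := hw
    have hq : B v v = 0 := hv
    exact (hWmem _).mpr (by show B (ρ g v) (ρ g v) = 0; rw [hBinv]; exact hq)
  rcases hsimp W hWinv with hWbot | hWtop
  · -- W = ⊥ leads to contradiction with nontrivial action
    exfalso
    have hQne : ∀ x : V, x ≠ 0 → Q x ≠ 0 := by
      intro x hx hq
      have hmem : x ∈ W := (hWmem x).mpr hq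
      rw [hWbot] at hmem
      exact hx ((Submodule.mem_bot k).mp hmem)
    obtain ⟨g, v, hgv⟩ := hnontrivaction
    have hv : v ≠ 0 := by
      rintro rfl
      exact hgv (map_zero _)
    have hgv0 : ρ g v ≠ 0 := by
      intro h
      apply hv
      rw [← hcancel g v, h, map_zero]
    -- any two nonzero vectors are proportional
    have hprop : ∀ x y : V, x ≠ 0 → y ≠ 0 → ∃ l : k, l ≠ 0 ∧ x = l • y := by
      intro x y hx hy
      have hQx := hQne x hx
      have hQy := hQne y hy
      obtain ⟨l, hl⟩ := IsAlgClosed.exists_pow_nat_eq (Q x * (Q y)⁻¹) (n := 2) two_pos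
      have hl2 : l * l = Q x * (Q y)⁻¹ := by rw [← hl]; ring
      have hlne : l ≠ 0 := by
        rintro rfl
        rw [zero_mul] at hl2
        rcases mul_eq_zero.mp hl2.symm with h | h
        · exact hQx h
        · exact inv_ne_zero hQy h
      have hzero : Q (x + l • y) = 0 := by
        rw [hQadd, hQsmul, hl2, inv_mul_cancel_right₀ hQy]
        exact CharTwo.add_self_eq_zero _
      have : x + l • y = 0 := by
        by_contra h
        exact hQne _ h hzero
      refine ⟨l, hlne, ?_⟩
      have h5 := eq_neg_of_add_eq_zero_left this
      rwa [show -(l • y) = (-l) • y from (neg_smul l y).symm, CharTwo.neg_eq] at h5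
    obtain ⟨l, hl, hlv⟩ := hprop (ρ g v) v hgv0 hv
    have hQv := hQne v hv
    have hQgv : Q (ρ g v) = Q v := hBinv g v v
    have heq : Q v = l * l * Q v := by
      conv_lhs => rw [← hQgv]
      rw [hlv, hQsmul]
    have hl2 : l * l = 1 := by
      have h : (l * l - 1) * Q v = 0 := by linear_combination -heq
      rcases mul_eq_zero.mp h with h | h
      · exact sub_eq_zero.mp h
      · exact absurd h hQv
    have hl1 : l = 1 := hsq l hl2
    apply hgv
    rw [hlv, hl1, one_smul]
  · -- W = ⊤ : B is alternating, conclude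
    have halt : ∀ v : V, B v v = 0 := by
      intro v
      have : v ∈ W := hWtop ▸ Submodule.mem_top
      exact (hWmem v).mp this
    refine ⟨B, halt, hBinv, hBnd, ?_, ?_⟩
    · intro B' halt' hinv' hnd'
      obtain ⟨c, hc⟩ := huniq B' hinv'
      refine ⟨c, ?_, hc⟩
      intro h
      rw [h, zero_smul] at hc
      obtain ⟨v, hv⟩ := exists_ne (0 : V)
      exact hv (hnd'.1 v (fun w => by rw [hc]; rfl))
    · exact altEvenAux (Module.finrank k V) V B halt hBnd rfl
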